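/- Cut admissibility, negative principal case: if Γ and U are suspension-normal, U is stable, Γ ; · ⊢ A⁻ is derivable, and Γ ; [A⁻] ⊢ U is derivable, then Γ ; · ⊢ U is derivable in the focused sequent calculus for polarized intuitionistic logic. -/

import Mathlib

namespace StructuralFocalization

/- Polarized propositional intuitionistic logic -/
mutual
inductive PProp : Type
  | atom : Nat → PProp
  | down : NProp → PProp
  | bot  : PProp
  | or   : PProp → PProp → PProp
  | top  : PProp
  | and  : PProp → PProp → PProp
inductive NProp : Type
  | atom : Nat → NProp
  | up   : PProp → NProp
  | imp  : PProp → NProp → NProp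
  | top  : NProp
  | and  : NProp → NProp → NProp
end

/- Hypotheses: negative propositions or suspended positives ⟨A⁺⟩ -/
inductive Hyp : Type
  | neg  : NProp → Hyp
  | susp : PProp → Hyp

/- Succedents: A⁺, A⁻, or suspended ⟨A⁻⟩ -/
inductive Succ : Type
  | pos  : PProp → Succ
  | neg  : NProp → Succ
  | susp : NProp → Succ

abbrev Ctx := List Hyp

def Succ.stable : Succ → Prop
  | .pos _ => True
  | .susp _ => True
  | .neg _ => False

def Hyp.suspNormal : Hyp → Prop
  | .susp (PProp.atom _) => True
  | .susp _ => False
  | .neg _ => True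

def Ctx.suspNormal (Γ : Ctx) : Prop := ∀ h ∈ Γ, h.suspNormal

def Succ.suspNormal : Succ → Prop
  | .susp (NProp.atom _) => True
  | .susp _ => False
  | _ => True

/- The focused sequent calculus (Figures 3 and 4 of "Structural focalization",
   with the generalized id⁺/id⁻ rules for arbitrary suspended propositions). -/
mutual
/-- Right focus: Γ ⊢ [A⁺] -/
inductive RFoc : Ctx → PProp → Prop
  | idP {Γ A} : Hyp.susp A ∈ Γ → RFoc Γ A
  | downR {Γ A} : Inv Γ [] (Succ.neg A) → RFoc Γ (PProp.down A)
  | orR1 {Γ A B} : RFoc Γ A → RFoc Γ (PProp.or A B)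
  | orR2 {Γ A B} : RFoc Γ B → RFoc Γ (PProp.or A B)
  | topR {Γ} : RFoc Γ PProp.top
  | andR {Γ A B} : RFoc Γ A → RFoc Γ B → RFoc Γ (PProp.and A B)
/-- Inversion: Γ ; Ω ⊢ U -/
inductive Inv : Ctx → List PProp → Succ → Prop
  | focR {Γ A} : RFoc Γ A → Inv Γ [] (Succ.pos A)
  | focL {Γ A U} : Hyp.neg A ∈ Γ → Succ.stable U → LFoc Γ A U → Inv Γ [] U
  | etaP {Γ p Ω U} : Inv (Hyp.susp (PProp.atom p) :: Γ) Ω U → Inv Γ (PProp.atom p :: Ω) U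
  | downL {Γ A Ω U} : Inv (Hyp.neg A :: Γ) Ω U → Inv Γ (PProp.down A :: Ω) U
  | botL {Γ Ω U} : Inv Γ (PProp.bot :: Ω) U
  | orL {Γ A B Ω U} : Inv Γ (A :: Ω) U → Inv Γ (B :: Ω) U → Inv Γ (PProp.or A B :: Ω) U
  | topPL {Γ Ω U} : Inv Γ Ω U → Inv Γ (PProp.top :: Ω) U
  | andPL {Γ A B Ω U} : Inv Γ (A :: B :: Ω) U → Inv Γ (PProp.and A B :: Ω) U
  | etaN {Γ p} : Inv Γ [] (Succ.susp (NProp.atom p)) → Inv Γ [] (Succ.neg (NProp.atom p))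
  | upR {Γ A} : Inv Γ [] (Succ.pos A) → Inv Γ [] (Succ.neg (NProp.up A))
  | impR {Γ A B} : Inv Γ [A] (Succ.neg B) → Inv Γ [] (Succ.neg (NProp.imp A B))
  | topNR {Γ} : Inv Γ [] (Succ.neg NProp.top)
  | andNR {Γ A B} : Inv Γ [] (Succ.neg A) → Inv Γ [] (Succ.neg B) →
      Inv Γ [] (Succ.neg (NProp.and A B))
/-- Left focus: Γ ; [A⁻] ⊢ U -/
inductive LFoc : Ctx → NProp → Succ → Prop
  | idN {Γ A} : LFoc Γ A (Succ.susp A)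
  | upL {Γ A U} : Inv Γ [A] U → LFoc Γ (NProp.up A) U
  | impL {Γ A B U} : RFoc Γ A → LFoc Γ B U → LFoc Γ (NProp.imp A B) U
  | andL1 {Γ A B U} : LFoc Γ A U → LFoc Γ (NProp.and A B) U
  | andL2 {Γ A B U} : LFoc Γ B U → LFoc Γ (NProp.and A B) U
end

/- Unpolarized propositions and Kleene's G3 -/
inductive UProp : Type
  | atom : Nat → UProp
  | bot  : UProp
  | or   : UProp → UProp → UProp
  | top  : UProp
  | and  : UProp → UProp → UProp
  | imp  : UProp → UProp → UProp

inductive G3 : List UProp → UProp → Prop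
  | init {Γ p} : UProp.atom p ∈ Γ → G3 Γ (UProp.atom p)
  | botL {Γ Q} : UProp.bot ∈ Γ → G3 Γ Q
  | orR1 {Γ A B} : G3 Γ A → G3 Γ (UProp.or A B)
  | orR2 {Γ A B} : G3 Γ B → G3 Γ (UProp.or A B)
  | orL {Γ A B Q} : UProp.or A B ∈ Γ → G3 (A :: Γ) Q → G3 (B :: Γ) Q → G3 Γ Q
  | topR {Γ} : G3 Γ UProp.top
  | andR {Γ A B} : G3 Γ A → G3 Γ B → G3 Γ (UProp.and A B)
  | andL1 {Γ A B Q} : UProp.and A B ∈ Γ → G3 (A :: Γ) Q → G3 Γ Q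
  | andL2 {Γ A B Q} : UProp.and A B ∈ Γ → G3 (B :: Γ) Q → G3 Γ Q
  | impR {Γ A B} : G3 (A :: Γ) B → G3 Γ (UProp.imp A B)
  | impL {Γ A B Q} : UProp.imp A B ∈ Γ → G3 Γ A → G3 (B :: Γ) Q → G3 Γ Q

/-- G3 with an ordered auxiliary context Ψ: Γ; Ψ ⊢ Q -/
inductive G3Psi : List UProp → List UProp → UProp → Prop
  | cons {Γ P Ψ Q} : G3Psi (P :: Γ) Ψ Q → G3Psi Γ (P :: Ψ) Q
  | nil {Γ Q} : G3 Γ Q → G3Psi Γ [] Q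

/- Erasure -/
mutual
def eraseP : PProp → UProp
  | .atom p => .atom p
  | .down A => eraseN A
  | .bot => .bot
  | .or A B => .or (eraseP A) (eraseP B)
  | .top => .top
  | .and A B => .and (eraseP A) (eraseP B)
def eraseN : NProp → UProp
  | .atom p => .atom p
  | .up A => eraseP A
  | .imp A B => .imp (eraseP A) (eraseN B)
  | .top => .top
  | .and A B => .and (eraseN A) (eraseN B)
end

def eraseHyp : Hyp → UProp
  | .neg A => eraseN A
  | .susp A => eraseP A

def eraseCtx (Γ : Ctx) : List UProp := Γ.map eraseHyp

def eraseSucc : Succ → UProp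
  | .pos A => eraseP A
  | .neg A => eraseN A
  | .susp A => eraseN A

/- ===== Auxiliary development for cut admissibility ===== -/

theorem suspNormal_cons {h : Hyp} {Γ : Ctx} (hh : Hyp.suspNormal h)
    (hΓ : Ctx.suspNormal Γ) : Ctx.suspNormal (h :: Γ) := by
  intro x hx
  rcases List.mem_cons.mp hx with rfl | hx
  · exact hh
  · exact hΓ _ hx

theorem memLift {x : Hyp} {Γ Γ' : Ctx} (s : ∀ h ∈ Γ, h ∈ Γ') :
    ∀ h ∈ (x :: Γ), h ∈ (x :: Γ') := by
  intro h hm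
  rcases List.mem_cons.mp hm with rfl | hm
  · exact List.mem_cons_self
  · exact List.mem_cons_of_mem _ (s _ hm)

/-- Renaming / weakening / contraction for inversion. -/
theorem renameI {Γ : Ctx} {Ω : List PProp} {U : Succ} (d : Inv Γ Ω U) :
    ∀ Γ' : Ctx, (∀ h ∈ Γ, h ∈ Γ') → Inv Γ' Ω U :=
  Inv.rec
    (motive_1 := fun Γ A _ => ∀ Γ' : Ctx, (∀ h ∈ Γ, h ∈ Γ') → RFoc Γ' A)
    (motive_2 := fun Γ Ω U _ => ∀ Γ' : Ctx, (∀ h ∈ Γ, h ∈ Γ') → Inv Γ' Ω U)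
    (motive_3 := fun Γ B U _ => ∀ Γ' : Ctx, (∀ h ∈ Γ, h ∈ Γ') → LFoc Γ' B U)
    (fun hm _ s => .idP (s _ hm))
    (fun _ ih _ s => .downR (ih _ s))
    (fun _ ih _ s => .orR1 (ih _ s))
    (fun _ ih _ s => .orR2 (ih _ s))
    (fun _ _ => .topR)
    (fun _ _ ih1 ih2 _ s => .andR (ih1 _ s) (ih2 _ s))
    (fun _ ih _ s => .focR (ih _ s))
    (fun hm hst _ ih _ s => .focL (s _ hm) hst (ih _ s))
    (fun _ ih _ s => .etaP (ih _ (memLift s)))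
    (fun _ ih _ s => .downL (ih _ (memLift s)))
    (fun _ _ => .botL)
    (fun _ _ ih1 ih2 _ s => .orL (ih1 _ s) (ih2 _ s))
    (fun _ ih _ s => .topPL (ih _ s))
    (fun _ ih _ s => .andPL (ih _ s))
    (fun _ ih _ s => .etaN (ih _ s))
    (fun _ ih _ s => .upR (ih _ s))
    (fun _ ih _ s => .impR (ih _ s))
    (fun _ _ => .topNR)
    (fun _ _ ih1 ih2 _ s => .andNR (ih1 _ s) (ih2 _ s))
    (fun _ _ => .idN)
    (fun _ ih _ s => .upL (ih _ s))
    (fun _ _ ih1 ih2 _ s => .impL (ih1 _ s) (ih2 _ s))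
    (fun _ ih _ s => .andL1 (ih _ s))
    (fun _ ih _ s => .andL2 (ih _ s))
    d

/- Sizes of propositions -/
mutual
def sizeP : PProp → Nat
  | .atom _ => 1
  | .down A => sizeN A + 1
  | .bot => 1
  | .or A B => sizeP A + sizeP B + 1
  | .top => 1
  | .and A B => sizeP A + sizeP B + 1
def sizeN : NProp → Nat
  | .atom _ => 1
  | .up A => sizeP A + 1
  | .imp A B => sizeP A + sizeN B + 1
  | .top => 1
  | .and A B => sizeN A + sizeN B + 1
end

/-- Statement of the positive principal cut for a fixed cut formula. -/
def CutPStmt (A : PProp) : Prop :=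
  ∀ {Γ : Ctx} {Ω : List PProp} {U : Succ}, Ctx.suspNormal Γ → Succ.suspNormal U →
    RFoc Γ A → Inv Γ (A :: Ω) U → Inv Γ Ω U

/-- Statement of the negative principal cut for a fixed cut formula. -/
def CutNStmt (A : NProp) : Prop :=
  ∀ {Γ : Ctx} {U : Succ}, Ctx.suspNormal Γ → Succ.suspNormal U → Succ.stable U →
    Inv Γ [] (Succ.neg A) → LFoc Γ A U → Inv Γ [] U

/-- Left commutative cut, parametrized by the positive principal cut. -/
theorem lcutI {A : PProp} (hc : CutPStmt A) {Γ₀ : Ctx} {U : Succ}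
    (hU : Succ.suspNormal U) (hst : Succ.stable U) (E : Inv Γ₀ [A] U)
    {Γ : Ctx} {Ω : List PProp} {S : Succ} (D : Inv Γ Ω S) :
    S = Succ.pos A → Ctx.suspNormal Γ → (∀ h ∈ Γ₀, h ∈ Γ) → Inv Γ Ω U :=
  Inv.rec
    (motive_1 := fun _ _ _ => True)
    (motive_2 := fun Γ Ω S _ =>
      S = Succ.pos A → Ctx.suspNormal Γ → (∀ h ∈ Γ₀, h ∈ Γ) → Inv Γ Ω U)
    (motive_3 := fun Γ B S _ =>
      S = Succ.pos A → Ctx.suspNormal Γ → (∀ h ∈ Γ₀, h ∈ Γ) → LFoc Γ B U)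
    (fun _ => trivial)
    (fun _ _ => trivial)
    (fun _ _ => trivial)
    (fun _ _ => trivial)
    trivial
    (fun _ _ _ _ => trivial)
    -- focR
    (fun r _ heq hΓ s => by
      injection heq with h; subst h
      exact hc hΓ hU r (renameI E _ s))
    -- focL
    (fun hm _ _ ih heq hΓ s => .focL hm hst (ih heq hΓ s))
    -- etaP
    (fun _ ih heq hΓ s =>
      .etaP (ih heq (suspNormal_cons trivial hΓ)
        (fun h hm => List.mem_cons_of_mem _ (s h hm))))
    -- downL
    (fun _ ih heq hΓ s =>
      .downL (ih heq (suspNormal_cons trivial hΓ)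
        (fun h hm => List.mem_cons_of_mem _ (s h hm))))
    (fun _ _ _ => .botL)
    (fun _ _ ih1 ih2 heq hΓ s => .orL (ih1 heq hΓ s) (ih2 heq hΓ s))
    (fun _ ih heq hΓ s => .topPL (ih heq hΓ s))
    (fun _ ih heq hΓ s => .andPL (ih heq hΓ s))
    (fun _ _ heq => nomatch heq)
    (fun _ _ heq => nomatch heq)
    (fun _ _ heq => nomatch heq)
    (fun heq => nomatch heq)
    (fun _ _ _ _ heq => nomatch heq)
    -- idN
    (fun heq => nomatch heq)
    -- upL
    (fun _ ih heq hΓ s => .upL (ih heq hΓ s))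
    -- impL
    (fun r _ _ ih heq hΓ s => .impL r (ih heq hΓ s))
    (fun _ ih heq hΓ s => .andL1 (ih heq hΓ s))
    (fun _ ih heq hΓ s => .andL2 (ih heq hΓ s))
    D

theorem sLift {x : Hyp} {A : NProp} {Γ Γ' : Ctx}
    (s : ∀ h ∈ Γ', h = Hyp.neg A ∨ h ∈ Γ) :
    ∀ h ∈ (x :: Γ'), h = Hyp.neg A ∨ h ∈ (x :: Γ) := by
  intro h hm
  rcases List.mem_cons.mp hm with rfl | hm
  · exact .inr (List.mem_cons_self)
  · rcases s _ hm with h1 | h2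
    · exact .inl h1
    · exact .inr (List.mem_cons_of_mem _ h2)

/-- Right commutative cut, parametrized by the negative principal cut. -/
theorem rcutI {A : NProp} (hc : CutNStmt A)
    {Γ' : Ctx} {Ω : List PProp} {U : Succ} (E : Inv Γ' Ω U) :
    ∀ Γ : Ctx, Ctx.suspNormal Γ → Succ.suspNormal U →
      (∀ h ∈ Γ', h = Hyp.neg A ∨ h ∈ Γ) → Inv Γ [] (Succ.neg A) → Inv Γ Ω U :=
  Inv.rec
    (motive_1 := fun Γ' B _ => ∀ Γ : Ctx, Ctx.suspNormal Γ →
      (∀ h ∈ Γ', h = Hyp.neg A ∨ h ∈ Γ) → Inv Γ [] (Succ.neg A) → RFoc Γ B)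
    (motive_2 := fun Γ' Ω U _ => ∀ Γ : Ctx, Ctx.suspNormal Γ → Succ.suspNormal U →
      (∀ h ∈ Γ', h = Hyp.neg A ∨ h ∈ Γ) → Inv Γ [] (Succ.neg A) → Inv Γ Ω U)
    (motive_3 := fun Γ' B U _ => ∀ Γ : Ctx, Ctx.suspNormal Γ → Succ.suspNormal U →
      (∀ h ∈ Γ', h = Hyp.neg A ∨ h ∈ Γ) → Inv Γ [] (Succ.neg A) → LFoc Γ B U)
    -- idP
    (fun hm _ _ s _ => by
      rcases s _ hm with h1 | h2
      · exact absurd h1 (by simp)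
      · exact .idP h2)
    (fun _ ih _ hΓ s D => .downR (ih _ hΓ trivial s D))
    (fun _ ih _ hΓ s D => .orR1 (ih _ hΓ s D))
    (fun _ ih _ hΓ s D => .orR2 (ih _ hΓ s D))
    (fun _ _ _ _ => .topR)
    (fun _ _ ih1 ih2 _ hΓ s D => .andR (ih1 _ hΓ s D) (ih2 _ hΓ s D))
    -- focR
    (fun _ ih _ hΓ _ s D => .focR (ih _ hΓ s D))
    -- focL
    (fun hm hst _ ih _ hΓ hU s D => by
      have l' := ih _ hΓ hU s D
      rcases s _ hm with h1 | h2
      · cases h1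
        exact hc hΓ hU hst D l'
      · exact .focL h2 hst l')
    -- etaP
    (fun _ ih _ hΓ hU s D =>
      .etaP (ih _ (suspNormal_cons trivial hΓ) hU (sLift s)
        (renameI D _ (fun h hm => List.mem_cons_of_mem _ hm))))
    -- downL
    (fun _ ih _ hΓ hU s D =>
      .downL (ih _ (suspNormal_cons trivial hΓ) hU (sLift s)
        (renameI D _ (fun h hm => List.mem_cons_of_mem _ hm))))
    (fun _ _ _ _ _ => .botL)
    (fun _ _ ih1 ih2 _ hΓ hU s D => .orL (ih1 _ hΓ hU s D) (ih2 _ hΓ hU s D))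
    (fun _ ih _ hΓ hU s D => .topPL (ih _ hΓ hU s D))
    (fun _ ih _ hΓ hU s D => .andPL (ih _ hΓ hU s D))
    (fun _ ih _ hΓ _ s D => .etaN (ih _ hΓ trivial s D))
    (fun _ ih _ hΓ _ s D => .upR (ih _ hΓ trivial s D))
    (fun _ ih _ hΓ _ s D => .impR (ih _ hΓ trivial s D))
    (fun _ _ _ _ _ => .topNR)
    (fun _ _ ih1 ih2 _ hΓ _ s D => .andNR (ih1 _ hΓ trivial s D) (ih2 _ hΓ trivial s D))
    -- idN
    (fun _ _ _ _ _ => .idN)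
    (fun _ ih _ hΓ hU s D => .upL (ih _ hΓ hU s D))
    (fun _ _ ih1 ih2 _ hΓ hU s D => .impL (ih1 _ hΓ s D) (ih2 _ hΓ hU s D))
    (fun _ ih _ hΓ hU s D => .andL1 (ih _ hΓ hU s D))
    (fun _ ih _ hΓ hU s D => .andL2 (ih _ hΓ hU s D))
    E

/-- Principal cuts, by strong induction on the size of the cut formula. -/
theorem cutMain : ∀ n : Nat,
    (∀ A : PProp, sizeP A = n → CutPStmt A) ∧ (∀ A : NProp, sizeN A = n → CutNStmt A) := by
  intro n
  induction n using Nat.strong_induction_on with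
  | _ n IH =>
    constructor
    · intro A hA Γ Ω U hΓ hU r e
      cases A with
      | atom p =>
        cases r with
        | idP hm =>
          cases e with
          | etaP e' =>
            refine renameI e' _ (fun h hx => ?_)
            rcases List.mem_cons.mp hx with rfl | hx
            · exact hm
            · exact hx
      | down B =>
        cases r with
        | idP hm => exact absurd (hΓ _ hm) (by simp [Hyp.suspNormal])
        | downR d =>
          cases e with
          | downL e' =>
            refine rcutI ((IH (sizeN B) ?_).2 B rfl) e' _ hΓ hU ?_ d
            · subst hA; simp [sizeP]
            · intro h hm
              rcases List.mem_cons.mp hm with rfl | hm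
              · exact .inl rfl
              · exact .inr hm
      | bot =>
        cases r with
        | idP hm => exact absurd (hΓ _ hm) (by simp [Hyp.suspNormal])
      | or B C =>
        cases r with
        | idP hm => exact absurd (hΓ _ hm) (by simp [Hyp.suspNormal])
        | orR1 d =>
          cases e with
          | orL e1 e2 =>
            exact (IH (sizeP B) (by subst hA; simp [sizeP])).1 B rfl hΓ hU d e1
        | orR2 d =>
          cases e with
          | orL e1 e2 =>
            exact (IH (sizeP C) (by subst hA; simp [sizeP])).1 C rfl hΓ hU d e2
      | top =>
        cases r with
        | idP hm => exact absurd (hΓ _ hm) (by simp [Hyp.suspNormal])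
        | topR =>
          cases e with
          | topPL e' => exact e'
      | and B C =>
        cases r with
        | idP hm => exact absurd (hΓ _ hm) (by simp [Hyp.suspNormal])
        | andR d1 d2 =>
          cases e with
          | andPL e' =>
            have h1 := (IH (sizeP B) (by subst hA; simp [sizeP])).1 B rfl hΓ hU d1 e'
            exact (IH (sizeP C) (by subst hA; simp [sizeP])).1 C rfl hΓ hU d2 h1
    · intro A hA Γ U hΓ hU hst d e
      cases e with
      | idN =>
        cases A with
        | atom p =>
          cases d with
          | etaN d' => exact d'
          | focL _ hst' _ => exact hst'.elim
        | up B => exact absurd hU (by simp [Succ.suspNormal])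
        | imp B C => exact absurd hU (by simp [Succ.suspNormal])
        | top => exact absurd hU (by simp [Succ.suspNormal])
        | and B C => exact absurd hU (by simp [Succ.suspNormal])
      | upL e' =>
        cases d with
        | focL _ hst' _ => exact hst'.elim
        | upR d' =>
          rename_i B
          exact lcutI ((IH (sizeP B) (by subst hA; simp [sizeN])).1 B rfl)
            hU hst e' d' rfl hΓ (fun h hm => hm)
      | impL r l =>
        cases d with
        | focL _ hst' _ => exact hst'.elim
        | impR d' =>
          rename_i B C
          have d2 : Inv Γ [] (Succ.neg C) :=
            (IH (sizeP B) (by subst hA; simp [sizeN])).1 B rfl hΓ trivial r d'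
          exact (IH (sizeN C) (by subst hA; simp [sizeN])).2 C rfl hΓ hU hst d2 l
      | andL1 l =>
        cases d with
        | focL _ hst' _ => exact hst'.elim
        | andNR d1 d2 =>
          rename_i B C
          exact (IH (sizeN B) (by subst hA; simp [sizeN])).2 B rfl hΓ hU hst d1 l
      | andL2 l =>
        cases d with
        | focL _ hst' _ => exact hst'.elim
        | andNR d1 d2 =>
          rename_i B C
          exact (IH (sizeN C) (by subst hA; simp [sizeN])).2 C rfl hΓ hU hst d2 l
/-- Cut admissibility, negative principal case. -/
theorem cut_negative_principal {Γ : Ctx} {A : NProp} {U : Succ}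
    (hΓ : Ctx.suspNormal Γ) (hU : Succ.suspNormal U) (hst : Succ.stable U)
    (h1 : Inv Γ [] (Succ.neg A)) (h2 : LFoc Γ A U) :
    Inv Γ [] U := by
  exact (cutMain (sizeN A)).2 A rfl hΓ hU hst h1 h2

end StructuralFocalization
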